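/- Let n ≥ 3 be an integer, let α ∈ [1/2, 1) ∪ (1, ∞), and let p* ∈ (0, 1/n) satisfy the tangency equation. For every h ∈ [0, ln n] there exist t ∈ [0, 1] and p_0, p_1 ∈ 𝒫_n such that t·H(p_0) + (1−t)·H(p_1) = h and t·‖p_0‖_α + (1−t)·‖p_1‖_α = L_max^α(h). Indeed, when h ≤ H_{v_n}(p*) one may take p_0 = p_1 = v_n(p) where p ∈ [0, 1/n] satisfies H_{v_n}(p) = h, and when h > H_{v_n}(p*) one may take p_0 = v_n(p*), p_1 = u_n, and t = (ln n − h)/(ln n − H_{v_n}(p*)). -/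

import Mathlib

open Real

/-- Shannon entropy (natural log, with `0 * log 0 = 0` since `Real.log 0 = 0`). -/
noncomputable def shannonEntropy {n : ℕ} (p : Fin n → ℝ) : ℝ :=
  -∑ i, p i * Real.log (p i)

/-- ℓ_α-norm of a vector (real power). -/
noncomputable def lNorm {n : ℕ} (α : ℝ) (p : Fin n → ℝ) : ℝ :=
  (∑ i, p i ^ α) ^ (1 / α)

/-- `p` is an `n`-ary probability vector. -/
def IsProbVec {n : ℕ} (p : Fin n → ℝ) : Prop :=
  (∀ i, 0 ≤ p i) ∧ ∑ i, p i = 1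

/-- The vector `v_n(q)`: first entry `1 - (n-1)q`, the other `n-1` entries equal `q`. -/
noncomputable def vVec (n : ℕ) (q : ℝ) : Fin n → ℝ :=
  fun i => if (i : ℕ) = 0 then 1 - ((n : ℝ) - 1) * q else q

/-- The vector `w_n(r)`: first `⌊1/r⌋` entries equal `r`, the next entry is
`1 - ⌊1/r⌋·r`, the remaining entries are `0`. -/
noncomputable def wVec (n : ℕ) (r : ℝ) : Fin n → ℝ :=
  fun i => if (i : ℕ) < ⌊1 / r⌋₊ then r
           else if (i : ℕ) = ⌊1 / r⌋₊ then 1 - (⌊1 / r⌋₊ : ℝ) * r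
           else 0

/-- `H_{v_n}(p) = H(v_n(p))`. -/
noncomputable def Hv (n : ℕ) (p : ℝ) : ℝ := shannonEntropy (vVec n p)

/-- The derivative of `‖v_n(p)‖_α` with respect to `H_{v_n}(p)`. -/
noncomputable def Dva (n : ℕ) (α p : ℝ) : ℝ :=
  (((n : ℝ) - 1) * p ^ α + (1 - ((n : ℝ) - 1) * p) ^ α) ^ (1 / α - 1) *
    ((p ^ (α - 1) - (1 - ((n : ℝ) - 1) * p) ^ (α - 1)) /
      (Real.log (1 - ((n : ℝ) - 1) * p) - Real.log p))

/-- The tangency equation `(ln n − H_{v_n}(p))·D_{n,α}(p) = n^{1/α−1} − ‖v_n(p)‖_α`. -/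
def TangencyEq (n : ℕ) (α p : ℝ) : Prop :=
  (Real.log n - Hv n p) * Dva n α p = (n : ℝ) ^ (1 / α - 1) - lNorm α (vVec n p)


lemma sum_ite_zero' (n : ℕ) (hn : 0 < n) (c d : ℝ) :
    ∑ i : Fin n, (if (i:ℕ) = 0 then c else d) = c + ((n:ℝ) - 1) * d := by
  have : NeZero n := ⟨hn.ne'⟩
  rw [← Finset.add_sum_erase Finset.univ _ (Finset.mem_univ (0 : Fin n))]
  have h2 : ∀ i ∈ Finset.univ.erase (0 : Fin n),
      (if (i:ℕ) = 0 then c else d) = d := by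
    intro i hi
    rw [if_neg]
    intro h
    exact (Finset.mem_erase.mp hi).1 (Fin.val_injective (by simpa using h))
  rw [Finset.sum_congr rfl h2, Finset.sum_const, Finset.card_erase_of_mem (Finset.mem_univ _),
    Finset.card_univ, Fintype.card_fin]
  simp [Nat.cast_sub hn, nsmul_eq_mul]

lemma hv_formula (n : ℕ) (hn : 0 < n) (q : ℝ) :
    Hv n q = -((1 - ((n:ℝ)-1)*q) * Real.log (1 - ((n:ℝ)-1)*q)
      + ((n:ℝ)-1) * (q * Real.log q)) := by
  unfold Hv shannonEntropy vVec
  have key : ∀ i : Fin n,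
      (if (i:ℕ) = 0 then 1 - ((n:ℝ)-1)*q else q) *
        Real.log (if (i:ℕ) = 0 then 1 - ((n:ℝ)-1)*q else q)
      = (if (i:ℕ) = 0 then (1 - ((n:ℝ)-1)*q) * Real.log (1 - ((n:ℝ)-1)*q)
         else q * Real.log q) := by
    intro i; split_ifs <;> rfl
  rw [Finset.sum_congr rfl (fun i _ => key i), sum_ite_zero' n hn]

lemma hv_zero (n : ℕ) (hn : 0 < n) : Hv n 0 = 0 := by
  rw [hv_formula n hn]; simp

lemma hv_unif (n : ℕ) (hn : 0 < n) : Hv n (1 / (n:ℝ)) = Real.log n := by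
  have hne : (n:ℝ) ≠ 0 := Nat.cast_ne_zero.mpr hn.ne'
  rw [hv_formula n hn]
  have h1 : 1 - ((n:ℝ)-1)*(1/(n:ℝ)) = 1/(n:ℝ) := by field_simp; ring
  rw [h1, one_div, Real.log_inv]
  field_simp
  ring

lemma hv_cont (n : ℕ) (hn : 0 < n) : Continuous (Hv n) := by
  have : Hv n = fun q => -((1 - ((n:ℝ)-1)*q) * Real.log (1 - ((n:ℝ)-1)*q)
      + ((n:ℝ)-1) * (q * Real.log q)) := funext (hv_formula n hn)
  rw [this]
  exact ((Real.continuous_mul_log.comp (by continuity)).add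
    (continuous_const.mul Real.continuous_mul_log)).neg

lemma vvec_prob (n : ℕ) (hn : 0 < n) (q : ℝ) (hq : q ∈ Set.Icc (0:ℝ) (1/(n:ℝ))) :
    IsProbVec (vVec n q) := by
  have hn1 : (1:ℝ) ≤ n := by exact_mod_cast hn
  have hnp : (0:ℝ) < n := by exact_mod_cast hn
  constructor
  · intro i
    unfold vVec
    split_ifs
    · have h1 : ((n:ℝ)-1)*q ≤ ((n:ℝ)-1)*(1/(n:ℝ)) :=
        mul_le_mul_of_nonneg_left hq.2 (by linarith)
      have h2 : ((n:ℝ)-1)*(1/(n:ℝ)) ≤ 1 := by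
        rw [mul_one_div, div_le_one hnp]; linarith
      linarith
    · exact hq.1
  · unfold vVec
    rw [sum_ite_zero' n hn]; ring

lemma unif_prob (n : ℕ) (hn : 0 < n) : IsProbVec (fun _ : Fin n => 1/(n:ℝ)) := by
  have hne : (n:ℝ) ≠ 0 := Nat.cast_ne_zero.mpr hn.ne'
  constructor
  · intro i; positivity
  · rw [Finset.sum_const, Finset.card_univ, Fintype.card_fin, nsmul_eq_mul]
    field_simp

lemma entropy_unif (n : ℕ) (hn : 0 < n) :
    shannonEntropy (fun _ : Fin n => 1/(n:ℝ)) = Real.log n := by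
  have hne : (n:ℝ) ≠ 0 := Nat.cast_ne_zero.mpr hn.ne'
  unfold shannonEntropy
  rw [Finset.sum_const, Finset.card_univ, Fintype.card_fin, nsmul_eq_mul,
    one_div, Real.log_inv]
  field_simp

lemma lnorm_unif (n : ℕ) (hn : 0 < n) (α : ℝ) (hα : 0 < α) :
    lNorm α (fun _ : Fin n => 1/(n:ℝ)) = (n:ℝ) ^ (1/α - 1) := by
  have hnp : (0:ℝ) < n := by exact_mod_cast hn
  unfold lNorm
  rw [Finset.sum_const, Finset.card_univ, Fintype.card_fin, nsmul_eq_mul]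
  have h1 : (1/(n:ℝ)) ^ α = (n:ℝ) ^ (-α) := by
    rw [one_div, Real.inv_rpow hnp.le, ← Real.rpow_neg hnp.le]
  rw [h1]
  have h2 : (n:ℝ) * (n:ℝ)^(-α) = (n:ℝ)^(1-α) := by
    rw [show (1:ℝ)-α = 1 + -α by ring, Real.rpow_add hnp, Real.rpow_one]
  rw [h2, ← Real.rpow_mul hnp.le]
  congr 1
  field_simp

theorem stmt12 (n : ℕ) (hn : 3 ≤ n) (α : ℝ)
    (hα : α ∈ Set.Ico (1 / 2 : ℝ) 1 ∪ Set.Ioi 1)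
    (pstar : ℝ) (hps : pstar ∈ Set.Ioo (0 : ℝ) (1 / (n : ℝ)))
    (hpt : TangencyEq n α pstar)
    (L : ℝ → ℝ)
    (hL1 : ∀ p ∈ Set.Icc (0 : ℝ) (1 / (n : ℝ)), Hv n p ≤ Hv n pstar →
      L (Hv n p) = lNorm α (vVec n p))
    (hL2 : ∀ h ∈ Set.Icc (0 : ℝ) (Real.log n), Hv n pstar < h →
      L h = ((Real.log n - h) / (Real.log n - Hv n pstar)) * lNorm α (vVec n pstar) +
        (1 - (Real.log n - h) / (Real.log n - Hv n pstar)) * (n : ℝ) ^ (1 / α - 1)) :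
    (∀ h ∈ Set.Icc (0 : ℝ) (Real.log n),
      ∃ t ∈ Set.Icc (0 : ℝ) 1, ∃ p₀ p₁ : Fin n → ℝ, IsProbVec p₀ ∧ IsProbVec p₁ ∧
        t * shannonEntropy p₀ + (1 - t) * shannonEntropy p₁ = h ∧
        t * lNorm α p₀ + (1 - t) * lNorm α p₁ = L h) ∧
    (∀ h ∈ Set.Icc (0 : ℝ) (Real.log n), h ≤ Hv n pstar →
      ∀ p ∈ Set.Icc (0 : ℝ) (1 / (n : ℝ)), Hv n p = h →
        shannonEntropy (vVec n p) = h ∧ lNorm α (vVec n p) = L h) ∧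
    (∀ h ∈ Set.Icc (0 : ℝ) (Real.log n), Hv n pstar < h →
      ((Real.log n - h) / (Real.log n - Hv n pstar)) * shannonEntropy (vVec n pstar) +
          (1 - (Real.log n - h) / (Real.log n - Hv n pstar)) *
            shannonEntropy (fun _ : Fin n => 1 / (n : ℝ)) = h ∧
      ((Real.log n - h) / (Real.log n - Hv n pstar)) * lNorm α (vVec n pstar) +
          (1 - (Real.log n - h) / (Real.log n - Hv n pstar)) *
            lNorm α (fun _ : Fin n => 1 / (n : ℝ)) = L h) := by
  have hn0 : 0 < n := by omega
  have hα0 : 0 < α := by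
    rcases hα with h | h
    · linarith [h.1]
    · linarith [Set.mem_Ioi.mp h]
  refine ⟨?_, ?_, ?_⟩
  · intro h hmem
    by_cases hle : h ≤ Hv n pstar
    · have hsub := intermediate_value_Icc (by positivity : (0:ℝ) ≤ 1/(n:ℝ))
        (hv_cont n hn0).continuousOn
      have hmem' : h ∈ Set.Icc (Hv n 0) (Hv n (1/(n:ℝ))) := by
        rw [hv_zero n hn0, hv_unif n hn0]; exact hmem
      obtain ⟨p, hp, hph⟩ := hsub hmem'
      refine ⟨1, by norm_num, vVec n p, vVec n p, vvec_prob n hn0 p hp,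
        vvec_prob n hn0 p hp, ?_, ?_⟩
      · rw [show shannonEntropy (vVec n p) = Hv n p from rfl, hph]; ring
      · have h' := hL1 p hp (hph.trans_le hle)
        rw [hph] at h'
        rw [h']; ring
    · push_neg at hle
      have hd : 0 < Real.log n - Hv n pstar := by
        have := hmem.2; linarith
      set t := (Real.log n - h) / (Real.log n - Hv n pstar) with ht
      have ht0 : 0 ≤ t := div_nonneg (by linarith [hmem.2]) hd.le
      have ht1 : t ≤ 1 := by
        rw [ht, div_le_one hd]; linarith
      refine ⟨t, ⟨ht0, ht1⟩, vVec n pstar, fun _ => 1/(n:ℝ),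
        vvec_prob n hn0 pstar ⟨hps.1.le, hps.2.le⟩, unif_prob n hn0, ?_, ?_⟩
      · rw [show shannonEntropy (vVec n pstar) = Hv n pstar from rfl,
          entropy_unif n hn0, ht]
        field_simp [hd.ne']
        ring
      · rw [lnorm_unif n hn0 α hα0, hL2 h hmem hle]
  · intro h hmem hle p hp hph
    refine ⟨hph, ?_⟩
    have h' := hL1 p hp (hph.trans_le hle)
    rw [hph] at h'
    exact h'.symm
  · intro h hmem hlt
    have hd : 0 < Real.log n - Hv n pstar := by linarith [hmem.2]
    constructor
    · rw [show shannonEntropy (vVec n pstar) = Hv n pstar from rfl,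
        entropy_unif n hn0]
      field_simp [hd.ne']
      ring
    · rw [lnorm_unif n hn0 α hα0, ← hL2 h hmem hlt]
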